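/- (Kakeya, part (b)) Let (x_n)_{n=1}^∞ be a sequence of strictly positive real numbers such that ∑_n x_n converges and such that ∑_{k=n+1}^∞ x_k < x_n holds for every sufficiently large n ∈ ℕ. Then the achievement set { ∑_{n=1}^∞ ε_n x_n : ε_n ∈ {0,1} for every n } is a closed subset of ℝ with empty interior. -/

import Mathlib

open Filter

private lemma ach_closed (x : ℕ → ℝ) (hpos : ∀ n, 0 ≤ x n) (hsum : Summable x) :
    IsClosed {y : ℝ | ∃ T : Set ℕ, HasSum (Set.indicator T x) y} := by
  classical
  have key : {y : ℝ | ∃ T : Set ℕ, HasSum (Set.indicator T x) y}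
      = Set.range (fun ε : ℕ → Bool => ∑' n, if ε n then x n else 0) := by
    ext y
    constructor
    · rintro ⟨T, hT⟩
      refine ⟨fun n => decide (n ∈ T), ?_⟩
      have he : (fun n => if (decide (n ∈ T) : Bool) then x n else 0) = Set.indicator T x := by
        ext n; by_cases h : n ∈ T <;> simp [h, Set.indicator_apply]
      simp only [he]
      exact hT.tsum_eq
    · rintro ⟨ε, rfl⟩
      refine ⟨{n | ε n = true}, ?_⟩
      have he : Set.indicator {n | ε n = true} x = fun n => if ε n then x n else 0 := by
        ext n; by_cases h : ε n <;> simp [Set.indicator_apply, h]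
      rw [he]
      exact (Summable.hasSum (by rw [← he]; exact hsum.indicator _))
  rw [key, ← Set.image_univ]
  have hcont : Continuous (fun ε : ℕ → Bool => ∑' n, if ε n then x n else 0) := by
    apply continuous_tsum (u := x) ?_ hsum ?_
    · intro n
      have : Continuous (fun b : Bool => if b then x n else 0) := continuous_of_discreteTopology
      exact this.comp (continuous_apply n)
    · intro n ε
      by_cases h : ε n <;> simp [h, Real.norm_eq_abs, abs_of_nonneg (hpos n), hpos n]
  exact (isCompact_univ.image hcont).isClosed

private lemma ach_int_empty (x : ℕ → ℝ) (hpos : ∀ n, 0 < x n) (hsum : Summable x)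
    (hcond : ∀ n, (∑' k : ℕ, x (n + 1 + k)) < x n) :
    interior {y : ℝ | ∃ T : Set ℕ, HasSum (Set.indicator T x) y} = ∅ := by
  classical
  set A := {y : ℝ | ∃ T : Set ℕ, HasSum (Set.indicator T x) y} with hAdef
  -- helper facts
  have hind_nonneg : ∀ (S : Set ℕ) (i : ℕ), 0 ≤ Set.indicator S x i := by
    intro S i; by_cases h : i ∈ S <;> simp [Set.indicator_apply, h, (hpos i).le]
  have hind_le : ∀ (S : Set ℕ) (i : ℕ), Set.indicator S x i ≤ x i := by
    intro S i; by_cases h : i ∈ S <;> simp [Set.indicator_apply, h, (hpos i).le]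
  have hxshift : ∀ m : ℕ, Summable (fun k => x (k + m)) := fun m => (summable_nat_add_iff m).2 hsum
  have hindshift : ∀ (S : Set ℕ) (m : ℕ), Summable (fun k => Set.indicator S x (k + m)) :=
    fun S m => (summable_nat_add_iff m).2 (hsum.indicator S)
  have hxshift' : ∀ m : ℕ, Summable (fun k => x (m + 1 + k)) := by
    intro m
    exact ((hxshift (m + 1)).congr (fun k => by rw [show k + (m+1) = m + 1 + k by omega]))
  -- the tail sums
  set r : ℕ → ℝ := fun m => ∑' k, x (m + 1 + k) with hrdef
  have hr_nonneg : ∀ m, 0 ≤ r m := fun m => tsum_nonneg (fun k => (hpos _).le)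
  have hr_lt : ∀ m, r m < x m := hcond
  have hRsum : ∀ m : ℕ, (∑' k, x (k + m)) = x m + r m := by
    intro m
    rw [Summable.tsum_eq_zero_add (hxshift m)]
    congr 1
    · simp
    · exact tsum_congr (fun k => by rw [show k + 1 + m = m + 1 + k by omega])
  have hsplit : ∀ (S : Set ℕ) (m : ℕ), (∑' i, Set.indicator S x i)
      = ∑ i ∈ Finset.range m, Set.indicator S x i + ∑' k, Set.indicator S x (k + m) :=
    fun S m => (Summable.sum_add_tsum_nat_add m (hsum.indicator S)).symm
  have htail_le : ∀ (S : Set ℕ) (m : ℕ),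
      (∑' k, Set.indicator S x (k + m)) ≤ ∑' k, x (k + m) :=
    fun S m => Summable.tsum_le_tsum (fun k => hind_le S _) (hindshift S m) (hxshift m)
  have htail_nonneg : ∀ (S : Set ℕ) (m : ℕ), 0 ≤ ∑' k, Set.indicator S x (k + m) :=
    fun S m => tsum_nonneg (fun k => hind_nonneg S _)
  have htail_split : ∀ (S : Set ℕ) (m : ℕ), (∑' k, Set.indicator S x (k + m))
      = Set.indicator S x m + ∑' k, Set.indicator S x (k + 1 + m) := by
    intro S m
    rw [Summable.tsum_eq_zero_add (hindshift S m)]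
    congr 1
    simp
  have htail1_le : ∀ (S : Set ℕ) (m : ℕ), (∑' k, Set.indicator S x (k + 1 + m)) ≤ r m := by
    intro S m
    have h1 : (∑' k, Set.indicator S x (k + 1 + m)) ≤ ∑' k, x (k + 1 + m) := by
      refine Summable.tsum_le_tsum (fun k => hind_le S _) ?_ ?_
      · exact (hindshift S (m+1)).congr (fun k => by rw [show k + (m+1) = k + 1 + m by omega])
      · exact (hxshift (m+1)).congr (fun k => by rw [show k + (m+1) = k + 1 + m by omega])
    have h2 : (∑' k, x (k + 1 + m)) = r m :=
      tsum_congr (fun k => by rw [show k + 1 + m = m + 1 + k by omega])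
    linarith
  -- main argument
  by_contra hne
  obtain ⟨y, hy⟩ := Set.nonempty_iff_ne_empty.2 hne
  obtain ⟨δ, hδ, hball⟩ := Metric.isOpen_iff.1 isOpen_interior y hy
  obtain ⟨T, hT⟩ : y ∈ A := interior_subset hy
  obtain ⟨n, hn⟩ : ∃ n, (∑' k, x (k + n)) < δ :=
    ((tendsto_sum_nat_add x).eventually (gt_mem_nhds hδ)).exists
  set c : ℝ := ∑ i ∈ Finset.range n, Set.indicator T x i with hcdef
  -- the gap claim
  have hgap : ∀ w ∈ A, w ≤ c + r n ∨ c + x n ≤ w := by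
    rintro w ⟨T', hT'⟩
    have hw : w = ∑ i ∈ Finset.range n, Set.indicator T' x i
        + ∑' k, Set.indicator T' x (k + n) := by
      rw [← hT'.tsum_eq, hsplit T' n]
    by_cases hpre : ∀ i, i < n → Set.indicator T' x i = Set.indicator T x i
    · have hc' : ∑ i ∈ Finset.range n, Set.indicator T' x i = c :=
        Finset.sum_congr rfl (fun i hi => hpre i (Finset.mem_range.1 hi))
      by_cases hmem : n ∈ T'
      · right
        have h1 := htail_split T' n
        have h2 : Set.indicator T' x n = x n := by simp [Set.indicator_apply, hmem]
        have h3 : 0 ≤ ∑' k, Set.indicator T' x (k + 1 + n) :=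
          tsum_nonneg (fun k => hind_nonneg T' _)
        rw [hw, hc']
        linarith
      · left
        have h1 := htail_split T' n
        have h2 : Set.indicator T' x n = 0 := by simp [Set.indicator_apply, hmem]
        have h3 := htail1_le T' n
        rw [hw, hc']
        linarith
    · push_neg at hpre
      have hk := Nat.find_spec hpre
      set k := Nat.find hpre with hkdef
      have hkn : k < n := hk.1
      have hkprefix : ∀ i, i < k → Set.indicator T' x i = Set.indicator T x i := by
        intro i hik
        by_contra hne2
        exact Nat.find_min hpre hik ⟨lt_trans hik hkn, hne2⟩
      set c'' : ℝ := ∑ i ∈ Finset.range k, Set.indicator T x i with hc''def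
      have hc''T' : ∑ i ∈ Finset.range k, Set.indicator T' x i = c'' :=
        Finset.sum_congr rfl (fun i hi => hkprefix i (Finset.mem_range.1 hi))
      have hcsplit : c = c'' + ∑ i ∈ Finset.Ico k n, Set.indicator T x i := by
        rw [hcdef, hc''def, Finset.range_eq_Ico, Finset.range_eq_Ico]
        exact (Finset.sum_Ico_consecutive (Set.indicator T x) (Nat.zero_le k) hkn.le).symm
      by_cases h1 : k ∈ T' <;> by_cases h2 : k ∈ T
      · exact absurd (by simp [Set.indicator_apply, h1, h2]) hk.2
      · -- k ∈ T', k ∉ T : w is above the gap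
        right
        have hw_ge : c'' + x k ≤ w := by
          have h4 : ∑ i ∈ Finset.range (k+1), Set.indicator T' x i ≤ ∑' i, Set.indicator T' x i :=
            Summable.sum_le_tsum _ (fun i _ => hind_nonneg T' i) (hsum.indicator T')
          rw [Finset.sum_range_succ, hc''T'] at h4
          have h5 : Set.indicator T' x k = x k := by simp [Set.indicator_apply, h1]
          rw [h5] at h4
          rw [← hT'.tsum_eq]
          exact h4
        have hico : ∑ i ∈ Finset.Ico k n, Set.indicator T x i
            ≤ ∑ i ∈ Finset.Ico (k+1) n, x i := by
          rw [Finset.sum_eq_sum_Ico_succ_bot hkn]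
          have h5 : Set.indicator T x k = 0 := by simp [Set.indicator_apply, h2]
          rw [h5, zero_add]
          exact Finset.sum_le_sum (fun i _ => hind_le T i)
        have htop : ∑ i ∈ Finset.Ico (k+1) n, x i + x n = ∑ i ∈ Finset.Ico (k+1) (n+1), x i :=
          (Finset.sum_Ico_succ_top hkn x).symm
        have hsum_le : ∑ i ∈ Finset.Ico (k+1) (n+1), x i ≤ r k := by
          rw [Finset.sum_Ico_eq_sum_range]
          have : ∀ i, x (k + 1 + i) = (fun j => x (k + 1 + j)) i := fun i => rfl
          refine le_trans (le_of_eq ?_) (Summable.sum_le_tsum (Finset.range (n + 1 - (k+1)))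
            (fun i _ => (hpos _).le) (hxshift' k))
          rfl
        have := hr_lt k
        linarith
      · -- k ∉ T', k ∈ T : w is below the gap
        left
        have hw_le : w ≤ c'' + r k := by
          have h4 : w = ∑ i ∈ Finset.range (k+1), Set.indicator T' x i
              + ∑' j, Set.indicator T' x (j + (k+1)) := by
            rw [← hT'.tsum_eq, hsplit T' (k+1)]
          have h5 : Set.indicator T' x k = 0 := by simp [Set.indicator_apply, h1]
          rw [Finset.sum_range_succ, hc''T', h5, add_zero] at h4
          have h6 : (∑' j, Set.indicator T' x (j + (k+1))) ≤ r k := by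
            have := htail1_le T' k
            refine le_trans (le_of_eq (tsum_congr (fun j => by
              rw [show j + (k+1) = j + 1 + k by omega]))) this
          linarith [h4.ge, h6]
        have hc_ge : c'' + x k ≤ c := by
          rw [hcsplit]
          have h7 : x k ≤ ∑ i ∈ Finset.Ico k n, Set.indicator T x i := by
            rw [Finset.sum_eq_sum_Ico_succ_bot hkn]
            have h5 : Set.indicator T x k = x k := by simp [Set.indicator_apply, h2]
            rw [h5]
            have : 0 ≤ ∑ i ∈ Finset.Ico (k+1) n, Set.indicator T x i :=
              Finset.sum_nonneg (fun i _ => hind_nonneg T i)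
            linarith
          linarith
        have := hr_lt k
        have := hr_nonneg n
        linarith
      · exact absurd (by simp [Set.indicator_apply, h1, h2]) hk.2
  -- now derive the contradiction with the point z in the gap
  set z : ℝ := c + (r n + x n) / 2 with hzdef
  have hy_eq : y = c + ∑' k, Set.indicator T x (k + n) := by
    rw [← hT.tsum_eq, hsplit T n]
  have ht0 := htail_nonneg T n
  have ht1 := htail_le T n
  have hR := hRsum n
  have hzy : dist z y < δ := by
    rw [Real.dist_eq, abs_lt]
    constructor <;>
    · rw [hy_eq, hzdef]
      have := hr_lt n
      have := hr_nonneg n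
      have := (hpos n).le
      nlinarith [hn]
  have hzA : z ∈ A := interior_subset (hball hzy)
  have := hr_lt n
  rcases hgap z hzA with h | h <;> rw [hzdef] at h <;> linarith

private lemma interior_union_empty {α : Type*} [TopologicalSpace α] {S T : Set α}
    (hS : IsClosed S) (h1 : interior S = ∅) (h2 : interior T = ∅) :
    interior (S ∪ T) = ∅ := by
  rw [interior_eq_empty_iff_dense_compl] at h1 h2 ⊢
  rw [Set.compl_union]
  exact h1.inter_of_isOpen_left h2 hS.isOpen_compl

private lemma interior_biUnion_empty {α ι : Type*} [TopologicalSpace α] (s : Finset ι)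
    (f : ι → Set α) (h : ∀ i ∈ s, IsClosed (f i) ∧ interior (f i) = ∅) :
    interior (⋃ i ∈ s, f i) = ∅ := by
  classical
  induction s using Finset.induction_on with
  | empty => simp
  | @insert a t hni ih =>
    rw [Finset.set_biUnion_insert]
    exact interior_union_empty (h a (Finset.mem_insert_self a t)).1
      (h a (Finset.mem_insert_self a t)).2
      (ih (fun i hi => h i (Finset.mem_insert_of_mem hi)))

/-- Kakeya, part (b): if `x n` is positive, `∑ x n` converges, and eventually each term is
strictly greater than the sum of all subsequent terms, then the achievement set is a closed
set with empty interior. -/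
theorem stmt6 (x : ℕ → ℝ) (hpos : ∀ n, 0 < x n) (hsum : Summable x)
    (hcond : ∀ᶠ n in atTop, (∑' k : ℕ, x (n + 1 + k)) < x n) :
    IsClosed {y : ℝ | ∃ T : Set ℕ, HasSum (Set.indicator T x) y} ∧
      interior {y : ℝ | ∃ T : Set ℕ, HasSum (Set.indicator T x) y} = ∅ := by
  classical
  refine ⟨ach_closed x (fun n => (hpos n).le) hsum, ?_⟩
  obtain ⟨N, hN⟩ := eventually_atTop.1 hcond
  set z : ℕ → ℝ := fun k => x (N + k) with hzdef
  have hzsum : Summable z :=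
    ((summable_nat_add_iff N).2 hsum).congr (fun k => by simp [hzdef, Nat.add_comm])
  have hzpos : ∀ k, 0 < z k := fun k => hpos _
  have hzcond : ∀ m, (∑' k : ℕ, z (m + 1 + k)) < z m := by
    intro m
    have h1 := hN (N + m) (Nat.le_add_right N m)
    have h2 : (∑' k : ℕ, z (m + 1 + k)) = ∑' k : ℕ, x (N + m + 1 + k) :=
      tsum_congr (fun k => by simp only [hzdef]; rw [show N + (m + 1 + k) = N + m + 1 + k by omega])
    rw [h2]
    exact h1
  set AN := {y : ℝ | ∃ T : Set ℕ, HasSum (Set.indicator T z) y} with hANdef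
  have hANclosed : IsClosed AN := ach_closed z (fun k => (hzpos k).le) hzsum
  have hANint : interior AN = ∅ := ach_int_empty z hzpos hzsum hzcond
  -- covering
  set U : Finset ℕ → Set ℝ := fun s => (fun y => (∑ i ∈ s, x i) + y) '' AN with hUdef
  have hcover : {y : ℝ | ∃ T : Set ℕ, HasSum (Set.indicator T x) y}
      ⊆ ⋃ s ∈ (Finset.range N).powerset, U s := by
    rintro y ⟨T, hT⟩
    have hys : y = ∑ i ∈ Finset.range N, Set.indicator T x i
        + ∑' k, Set.indicator T x (k + N) := by
      rw [← hT.tsum_eq, (Summable.sum_add_tsum_nat_add N (hsum.indicator T)).symm]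
    set s : Finset ℕ := (Finset.range N).filter (· ∈ T) with hsdef
    have hmem : s ∈ (Finset.range N).powerset :=
      Finset.mem_powerset.2 (Finset.filter_subset _ _)
    have hsums : ∑ i ∈ s, x i = ∑ i ∈ Finset.range N, Set.indicator T x i := by
      rw [hsdef, Finset.sum_filter]
      exact Finset.sum_congr rfl (fun i _ => by by_cases h : i ∈ T <;> simp [Set.indicator_apply, h])
    have htails : (∑' k, Set.indicator T x (k + N)) ∈ AN := by
      refine ⟨{k | N + k ∈ T}, ?_⟩
      have he : Set.indicator {k | N + k ∈ T} z = fun k => Set.indicator T x (k + N) := by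
        ext k
        by_cases h : N + k ∈ T <;>
          simp [Set.indicator_apply, h, hzdef, Nat.add_comm N k]
      rw [he]
      exact ((summable_nat_add_iff N).2 (hsum.indicator T)).hasSum
    refine Set.mem_biUnion hmem ?_
    exact ⟨_, htails, by simp only []; rw [hsums]; exact hys.symm⟩
  have hprop : ∀ s ∈ (Finset.range N).powerset, IsClosed (U s) ∧ interior (U s) = ∅ := by
    intro s _
    have hcoe : (fun y => (∑ i ∈ s, x i) + y) = ⇑(Homeomorph.addLeft (∑ i ∈ s, x i)) := rfl
    constructor
    · rw [hUdef]
      simp only [hcoe]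
      exact (Homeomorph.isClosed_image _).2 hANclosed
    · rw [hUdef]
      simp only [hcoe]
      rw [← Homeomorph.image_interior, hANint, Set.image_empty]
  have := interior_biUnion_empty ((Finset.range N).powerset) U hprop
  have hsub := interior_mono hcover
  rw [this] at hsub
  exact Set.eq_empty_iff_forall_notMem.2 (fun a ha => (Set.notMem_empty a) (hsub ha))
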